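/- arXiv:2110.08543 — 3 statements merged into one kernel-verified Lean document; each statement's English description precedes it below -/
import Mathlib

section
/- Let n ∈ ℕ, 1 < p < ∞, q = p/(p−1) and ε ≥ 0. If 1 − ε Σ_{k=1}^{n} 1/(t_k s_k) ≥ 0 set m = n; otherwise choose m ∈ {0,1,…,n} such that 1 − ε Σ_{k=1}^{m} 1/(t_k s_k) ≥ 0 and 1 − ε Σ_{k=1}^{m+1} 1/(t_k s_k) < 0. Then E(A, W^{T,S}_{p,q}, J^n_{ε,∞}) = E(A, W^{T,S}_{p,q}, J^n_{ε,∞}, Ψ*_m) = t_{m+1} s_{m+1} + ε Σ_{k=1}^{m} (1 − t_{m+1} s_{m+1}/(t_k s_k)). -/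
open scoped ENNReal NNReal BigOperators

/-- The `ℓ_q` (quasi-)norm `(∑ |x_k|^q)^{1/q}` of a complex sequence, valued in `ℝ≥0∞`. -/
noncomputable def lqNorm (q : ℝ) (x : ℕ → ℂ) : ℝ≥0∞ :=
  (∑' k, (‖x k‖₊ : ℝ≥0∞) ^ q) ^ (1 / q)

/-- The class `W^T_q = {Th : h ∈ ℓ_q, ‖h‖_q ≤ 1}`, where `T` is the diagonal operator
determined by the sequence `t` (0-based indexing: `t k` is the paper's `t_{k+1}`). -/
def WT (q : ℝ) (t : ℕ → ℝ) : Set (ℕ → ℂ) :=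
  {x | ∃ h : ℕ → ℂ, (∀ k, x k = (t k : ℂ) * h k) ∧ lqNorm q h ≤ 1}

/-- The scalar product `A(x,y) = ⟨x,y⟩ = ∑_{k=1}^∞ x_k y_k`. -/
noncomputable def scalarProd (x y : ℕ → ℂ) : ℂ := ∑' k, x k * y k

/-- The error `E(A, W₁ × W₂, J, Ψ) = sup_{(x,y)} sup_{(a,b) ∈ J(x,y)} |⟨x,y⟩ − Ψ(a,b)|`
of a recovery method `Ψ` for the scalar product. -/
noncomputable def recErrSP {Z : Type*} (W₁ W₂ : Set (ℕ → ℂ))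
    (J : (ℕ → ℂ) → (ℕ → ℂ) → Set Z) (Ψ : Z → ℂ) : ℝ≥0∞ :=
  ⨆ x ∈ W₁, ⨆ y ∈ W₂, ⨆ ab ∈ J x y, (‖scalarProd x y - Ψ ab‖₊ : ℝ≥0∞)

/-- The error of optimal recovery `E(A, W₁ × W₂, J) = inf_Ψ E(A, W₁ × W₂, J, Ψ)`. -/
noncomputable def optErrSP {Z : Type*} (W₁ W₂ : Set (ℕ → ℂ))
    (J : (ℕ → ℂ) → (ℕ → ℂ) → Set Z) : ℝ≥0∞ :=
  ⨅ Ψ : Z → ℂ, recErrSP W₁ W₂ J Ψ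

/-- The method `Ψ*_m(a,b) = ∑_{k=1}^m a_k b_k (1 − t_{m+1}s_{m+1}/(t_k s_k))`
(0-based: `t m * s m` is the paper's `t_{m+1}s_{m+1}`); `PsiStar t s n 0 = Ψ*_0 = 0`. -/
noncomputable def PsiStar (t s : ℕ → ℝ) (n m : ℕ)
    (ab : (Fin n → ℂ) × (Fin n → ℂ)) : ℂ :=
  ∑ k : Fin n, if (k : ℕ) < m then
    ab.1 k * ab.2 k * ((1 - t m * s m / (t (k : ℕ) * s (k : ℕ)) : ℝ) : ℂ) else 0

/-- The information mapping
`J^n_{ε,∞}(x,y) = {(a,b) ∈ ℂⁿ × ℂⁿ : max_{1≤k≤n} |x_k y_k − a_k b_k| ≤ ε}`. -/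
def infoProdSup (n : ℕ) (ε : ℝ) (x y : ℕ → ℂ) : Set ((Fin n → ℂ) × (Fin n → ℂ)) :=
  {ab | ∀ k : Fin n, ‖x (k : ℕ) * y (k : ℕ) - ab.1 k * ab.2 k‖ ≤ ε}

open MeasureTheory
lemma nnnorm_ofReal_enn (r : ℝ) (hr : 0 ≤ r) : (‖(r : ℂ)‖₊ : ℝ≥0∞) = ENNReal.ofReal r := by
  rw [Complex.nnnorm_real]
  simp [ENNReal.ofReal, Real.nnnorm_of_nonneg hr, Real.toNNReal_of_nonneg hr]

lemma lqNorm_le_one_of_finsum (p : ℝ) (hp : 0 < p) (f : ℕ → ℝ) (hf : ∀ k, 0 ≤ f k)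
    (N : ℕ) (hsupp : ∀ k, N ≤ k → f k = 0)
    (hsum : ∑ k ∈ Finset.range N, f k ^ p ≤ 1) :
    lqNorm p (fun k => (f k : ℂ)) ≤ 1 := by
  unfold lqNorm
  have h1 : ∀ k, (‖(f k : ℂ)‖₊ : ℝ≥0∞) ^ p = ENNReal.ofReal (f k ^ p) := by
    intro k
    rw [nnnorm_ofReal_enn _ (hf k), ← ENNReal.ofReal_rpow_of_nonneg (hf k) hp.le]
  have h2 : (∑' k, (‖(f k : ℂ)‖₊ : ℝ≥0∞) ^ p) = ∑ k ∈ Finset.range N, ENNReal.ofReal (f k ^ p) := by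
    rw [tsum_eq_sum (s := Finset.range N)]
    · exact Finset.sum_congr rfl fun k _ => h1 k
    · intro k hk
      rw [h1 k, hsupp k (by simpa using hk), Real.zero_rpow hp.ne', ENNReal.ofReal_zero]
  rw [h2, ← ENNReal.ofReal_sum_of_nonneg (fun k _ => Real.rpow_nonneg (hf k) p)]
  exact ENNReal.rpow_le_one (by exact_mod_cast ENNReal.ofReal_le_one.2 hsum)
    (by positivity)

lemma hoelder_tsum {p q : ℝ} (hpq : p.HolderConjugate q) (h g : ℕ → ℂ)
    (hh : lqNorm p h ≤ 1) (hg : lqNorm q g ≤ 1) :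
    ∑' k, ((‖h k‖₊ * ‖g k‖₊ : ℝ≥0) : ℝ≥0∞) ≤ 1 := by
  have H := ENNReal.lintegral_mul_le_Lp_mul_Lq (Measure.count : Measure ℕ) hpq
    (f := fun k => (‖h k‖₊ : ℝ≥0∞)) (g := fun k => (‖g k‖₊ : ℝ≥0∞))
    (Measurable.aemeasurable (by exact measurable_of_countable _))
    (Measurable.aemeasurable (by exact measurable_of_countable _))
  simp only [Pi.mul_apply, lintegral_count] at H
  calc ∑' k, ((‖h k‖₊ * ‖g k‖₊ : ℝ≥0) : ℝ≥0∞)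
      = ∑' k, (‖h k‖₊ : ℝ≥0∞) * (‖g k‖₊ : ℝ≥0∞) := by
        simp [ENNReal.coe_mul]
    _ ≤ lqNorm p h * lqNorm q g := H
    _ ≤ 1 * 1 := mul_le_mul' hh hg
    _ = 1 := one_mul 1

lemma w_facts {p q : ℝ} (hpq : p.HolderConjugate q) (h g : ℕ → ℂ)
    (hh : lqNorm p h ≤ 1) (hg : lqNorm q g ≤ 1) :
    Summable (fun k => ‖h k‖ * ‖g k‖) ∧ (∑' k, ‖h k‖ * ‖g k‖) ≤ 1 := by
  have H := hoelder_tsum hpq h g hh hg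
  have hne : (∑' k, ((‖h k‖₊ * ‖g k‖₊ : ℝ≥0) : ℝ≥0∞)) ≠ ⊤ :=
    (lt_of_le_of_lt H ENNReal.one_lt_top).ne
  have hs : Summable (fun k => (‖h k‖₊ * ‖g k‖₊ : ℝ≥0)) :=
    ENNReal.tsum_coe_ne_top_iff_summable.1 hne
  have hsr : Summable (fun k => ‖h k‖ * ‖g k‖) := by
    have := NNReal.summable_coe.2 hs
    simpa using this
  refine ⟨hsr, ?_⟩
  rw [← ENNReal.coe_tsum hs] at H
  have h1 : (∑' k, (‖h k‖₊ * ‖g k‖₊ : ℝ≥0)) ≤ 1 := by exact_mod_cast H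
  calc (∑' k, ‖h k‖ * ‖g k‖)
      = NNReal.toReal (∑' k, ‖h k‖₊ * ‖g k‖₊) := by
        rw [NNReal.coe_tsum]; simp
    _ ≤ 1 := by exact_mod_cast h1

lemma upper_bound (n : ℕ) (p q : ℝ) (hpq : p.HolderConjugate q)
    (t s : ℕ → ℝ) (htpos : ∀ k, 0 < t k) (htmono : Antitone t)
    (hspos : ∀ k, 0 < s k) (hsmono : Antitone s)
    (ε : ℝ) (hε : 0 ≤ ε) (m : ℕ) (hmn : m ≤ n)
    (x y : ℕ → ℂ) (hx : x ∈ WT p t) (hy : y ∈ WT q s)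
    (ab : (Fin n → ℂ) × (Fin n → ℂ)) (hab : ab ∈ infoProdSup n ε x y) :
    ‖scalarProd x y - PsiStar t s n m ab‖ ≤
      t m * s m + ε * ∑ k ∈ Finset.range m, (1 - t m * s m / (t k * s k)) := by
  obtain ⟨h, hxh, hh⟩ := hx
  obtain ⟨g, hyg, hg⟩ := hy
  obtain ⟨hw, hw1⟩ := w_facts hpq h g hh hg
  set w : ℕ → ℝ := fun k => ‖h k‖ * ‖g k‖ with hwdef
  have hwnn : ∀ k, 0 ≤ w k := fun k => mul_nonneg (norm_nonneg _) (norm_nonneg _)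
  have hts : ∀ k, 0 < t k * s k := fun k => mul_pos (htpos k) (hspos k)
  have htsmono : ∀ {j k : ℕ}, j ≤ k → t k * s k ≤ t j * s j := fun {j k} hjk =>
    mul_le_mul (htmono hjk) (hsmono hjk) (hspos k).le (htpos j).le
  have hfnorm : ∀ k, ‖x k * y k‖ = t k * s k * w k := by
    intro k
    rw [hxh k, hyg k]
    have e : (t k : ℂ) * h k * ((s k : ℂ) * g k) = ((t k * s k : ℝ) : ℂ) * (h k * g k) := by
      push_cast; ring
    rw [e, norm_mul, Complex.norm_real, Real.norm_of_nonneg (hts k).le, norm_mul]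
  have hfn : Summable (fun k => ‖x k * y k‖) := by
    refine Summable.of_nonneg_of_le (fun k => norm_nonneg _) (fun k => ?_) (hw.mul_left (t 0 * s 0))
    rw [hfnorm k]
    exact mul_le_mul_of_nonneg_right (htsmono (Nat.zero_le k)) (hwnn k)
  have hf : Summable (fun k => x k * y k) := hfn.of_norm
  set B := t m * s m with hBdef
  have hB : 0 ≤ B := (hts m).le
  set c : ℕ → ℝ := fun k => 1 - t m * s m / (t k * s k) with hcdef
  have hc_nonneg : ∀ k, k ≤ m → 0 ≤ c k := by
    intro k hk
    simp only [c, sub_nonneg]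
    exact div_le_one_of_le₀ (htsmono hk) (hts k).le
  have hc_one : ∀ k, 1 - c k = t m * s m / (t k * s k) := fun k => by simp [c]
  set A : ℕ → ℂ := fun k => if hk : k < n then ab.1 ⟨k, hk⟩ * ab.2 ⟨k, hk⟩ else 0 with hAdef
  have hA : ∀ k, k < n → ‖x k * y k - A k‖ ≤ ε := by
    intro k hk
    have := hab ⟨k, hk⟩
    simpa [A, dif_pos hk] using this
  have hPsi : PsiStar t s n m ab = ∑ k ∈ Finset.range m, A k * (c k : ℂ) := by
    unfold PsiStar
    have e1 : ∀ k : Fin n, (if (k : ℕ) < m then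
        ab.1 k * ab.2 k * ((1 - t m * s m / (t (k : ℕ) * s (k : ℕ)) : ℝ) : ℂ) else 0)
        = (fun j => if j < m then A j * (c j : ℂ) else 0) (k : ℕ) := by
      intro k
      simp only [A, c, dif_pos k.isLt, Fin.eta]
    rw [Finset.sum_congr rfl (fun k _ => e1 k),
      Fin.sum_univ_eq_sum_range (fun j => if j < m then A j * (c j : ℂ) else 0) n,
      ← Finset.sum_subset (Finset.range_subset_range.2 hmn)
        (fun k _ hk => if_neg (by simpa using hk))]
    exact Finset.sum_congr rfl (fun k hk => if_pos (Finset.mem_range.1 hk))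
  have hsplit := Summable.sum_add_tsum_nat_add (f := fun k => x k * y k) m hf
  have hD : scalarProd x y - PsiStar t s n m ab
      = (∑ k ∈ Finset.range m, (x k * y k - A k * (c k : ℂ))) + ∑' i, x (i + m) * y (i + m) := by
    simp only [scalarProd, hPsi, ← hsplit, Finset.sum_sub_distrib]
    ring
  have hterm : ∀ k ∈ Finset.range m, ‖x k * y k - A k * (c k : ℂ)‖ ≤ ε * c k + B * w k := by
    intro k hk
    have hkm : k < m := Finset.mem_range.1 hk
    have hkn : k < n := lt_of_lt_of_le hkm hmn
    have e : x k * y k - A k * (c k : ℂ)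
        = (x k * y k - A k) * (c k : ℂ) + (x k * y k) * ((1 - c k : ℝ) : ℂ) := by
      push_cast; ring
    rw [e]
    refine (norm_add_le _ _).trans ?_
    rw [norm_mul, norm_mul, Complex.norm_real, Complex.norm_real,
      Real.norm_of_nonneg (hc_nonneg k hkm.le),
      Real.norm_of_nonneg (by rw [hc_one k]; exact div_nonneg hB (hts k).le)]
    have h2 : ‖x k * y k‖ * (1 - c k) = B * w k := by
      rw [hfnorm k, hc_one k, hBdef]
      field_simp [(htpos k).ne', (hspos k).ne']
    rw [h2]
    exact add_le_add (mul_le_mul_of_nonneg_right (hA k hkn) (hc_nonneg k hkm.le)) le_rfl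
  have hwshift : Summable (fun i => w (i + m)) := (summable_nat_add_iff m).2 hw
  have hfnshift : Summable (fun i => ‖x (i + m) * y (i + m)‖) := (summable_nat_add_iff m).2 hfn
  have htail : ‖∑' i, x (i + m) * y (i + m)‖ ≤ B * ∑' i, w (i + m) := by
    refine (norm_tsum_le_tsum_norm hfnshift).trans ?_
    rw [← tsum_mul_left]
    refine Summable.tsum_le_tsum (fun i => ?_) hfnshift (hwshift.mul_left B)
    rw [hfnorm]
    exact mul_le_mul_of_nonneg_right (htsmono (Nat.le_add_left m i)) (hwnn _)
  rw [hD]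
  refine (norm_add_le _ _).trans ?_
  refine le_trans (add_le_add ((norm_sum_le _ _).trans (Finset.sum_le_sum hterm)) htail) ?_
  have e2 : ∑ k ∈ Finset.range m, (ε * c k + B * w k) + B * ∑' i, w (i + m)
      = ε * ∑ k ∈ Finset.range m, c k + B * ∑' k, w k := by
    rw [Finset.sum_add_distrib, ← Finset.mul_sum, ← Finset.mul_sum,
      ← Summable.sum_add_tsum_nat_add (f := w) m hw]
    ring
  rw [e2]
  have h3 : B * ∑' k, w k ≤ B * 1 := mul_le_mul_of_nonneg_left hw1 hB
  have h4 : c = fun k => 1 - B / (t k * s k) := rfl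
  nlinarith [h3]


lemma lower_bound_one (n : ℕ) (p q : ℝ) (hp0 : 0 < p) (hq0 : 0 < q)
    (t s : ℕ → ℝ) (htpos : ∀ k, 0 < t k) (htmono : Antitone t)
    (hspos : ∀ k, 0 < s k) (hsmono : Antitone s)
    (ε : ℝ) (hε : 0 ≤ ε) (m : ℕ) (hmn : m ≤ n)
    (hV : 0 ≤ t m * s m + ε * ∑ k ∈ Finset.range m, (1 - t m * s m / (t k * s k))) :
    ENNReal.ofReal
        (t m * s m + ε * ∑ k ∈ Finset.range m, (1 - t m * s m / (t k * s k)))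
      ≤ recErrSP (WT p t) (WT q s) (infoProdSup n ε) (PsiStar t s n m) := by
  set c : ℕ → ℝ := fun k => 1 - t m * s m / (t k * s k) with hcdef
  set x : ℕ → ℂ := fun k => if k = m then (t m : ℂ) else 0 with hxdef
  set y : ℕ → ℂ := fun k => if k = m then (s m : ℂ) else 0 with hydef
  have hxy : ∀ k, x k * y k = if k = m then ((t m * s m : ℝ) : ℂ) else 0 := by
    intro k
    by_cases hk : k = m <;> simp [x, y, hk]
  have hone : ∀ (r : ℝ) (_ : 0 < r), lqNorm r (fun k => if k = m then (1:ℂ) else 0) ≤ 1 := by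
    intro r hr
    have e : (fun k => if k = m then (1:ℂ) else 0)
        = fun k => (((if k = m then (1:ℝ) else 0) : ℝ) : ℂ) := by
      funext k; by_cases hk : k = m <;> simp [hk]
    rw [e]
    refine lqNorm_le_one_of_finsum r hr _ (fun k => by positivity) (m+1)
      (fun k hk => if_neg (by omega)) ?_
    have e2 : ∀ k ∈ Finset.range (m+1),
        ((if k = m then (1:ℝ) else 0)) ^ r = if k = m then (1:ℝ) else 0 := by
      intro k _
      by_cases hk : k = m <;> simp [hk, Real.zero_rpow hr.ne']
    rw [Finset.sum_congr rfl e2]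
    simp
  have hxmem : x ∈ WT p t := by
    refine ⟨fun k => if k = m then 1 else 0, fun k => ?_, hone p hp0⟩
    by_cases hk : k = m <;> simp [x, hk]
  have hymem : y ∈ WT q s := by
    refine ⟨fun k => if k = m then 1 else 0, fun k => ?_, hone q hq0⟩
    by_cases hk : k = m <;> simp [y, hk]
  set ab : (Fin n → ℂ) × (Fin n → ℂ) :=
    (fun _ => 1, fun k => x (k : ℕ) * y (k : ℕ) - ((ε : ℝ) : ℂ)) with habdef
  have habmem : ab ∈ infoProdSup n ε x y := by
    intro k
    simp only [ab, one_mul, sub_sub_cancel, Complex.norm_real]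
    rw [Real.norm_of_nonneg hε]
  have hsp : scalarProd x y = ((t m * s m : ℝ) : ℂ) := by
    rw [scalarProd, tsum_eq_single m (fun k hk => by rw [hxy k, if_neg hk])]
    rw [hxy m, if_pos rfl]
  have hPsi : PsiStar t s n m ab
      = ((-(ε * ∑ k ∈ Finset.range m, c k) : ℝ) : ℂ) := by
    unfold PsiStar
    have e1 : ∀ k : Fin n, (if (k : ℕ) < m then
        ab.1 k * ab.2 k * ((1 - t m * s m / (t (k : ℕ) * s (k : ℕ)) : ℝ) : ℂ) else 0)
        = (fun j => if j < m then ((-(ε * c j) : ℝ) : ℂ) else 0) (k : ℕ) := by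
      intro k
      by_cases hk : (k : ℕ) < m
      · have hne : (k : ℕ) ≠ m := Nat.ne_of_lt hk
        simp only [ab, hxy, if_pos hk, if_neg hne, c]
        push_cast
        ring
      · simp [hk]
    rw [Finset.sum_congr rfl (fun k _ => e1 k),
      Fin.sum_univ_eq_sum_range (fun j => if j < m then ((-(ε * c j) : ℝ) : ℂ) else 0) n,
      ← Finset.sum_subset (Finset.range_subset_range.2 hmn)
        (fun k _ hk => if_neg (by simpa using hk)),
      Finset.sum_congr rfl (fun k hk => if_pos (Finset.mem_range.1 hk))]
    have e3 : ∑ k ∈ Finset.range m, (-(ε * c k))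
        = -(ε * ∑ k ∈ Finset.range m, c k) := by
      rw [Finset.mul_sum, ← Finset.sum_neg_distrib]
    exact_mod_cast congrArg (fun r : ℝ => ((r : ℝ) : ℂ)) e3
  refine le_iSup₂_of_le x hxmem (le_iSup₂_of_le y hymem
    (le_iSup₂_of_le ab habmem (le_of_eq ?_)))
  have hdiff : scalarProd x y - PsiStar t s n m ab
      = ((t m * s m + ε * ∑ k ∈ Finset.range m, c k : ℝ) : ℂ) := by
    rw [hsp, hPsi]
    push_cast
    ring
  rw [hdiff, ← nnnorm_ofReal_enn _ hV]

lemma lower_bound_two (n : ℕ) (p q : ℝ) (hpq : Real.HolderConjugate p q)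
    (t s : ℕ → ℝ) (htpos : ∀ k, 0 < t k) (hspos : ∀ k, 0 < s k)
    (ε : ℝ) (hε : 0 ≤ ε) (m : ℕ) (hmn : m ≤ n)
    (hSm : 0 ≤ 1 - ε * ∑ k ∈ Finset.range m, 1 / (t k * s k))
    (hmlt : m < n → t m * s m * (1 - ε * ∑ k ∈ Finset.range m, 1 / (t k * s k)) ≤ ε)
    (Ψ : (Fin n → ℂ) × (Fin n → ℂ) → ℂ) :
    ENNReal.ofReal
        (t m * s m + ε * ∑ k ∈ Finset.range m, (1 - t m * s m / (t k * s k)))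
      ≤ recErrSP (WT p t) (WT q s) (infoProdSup n ε) Ψ := by
  have hp0 : 0 < p := hpq.pos
  have hq0 : 0 < q := hpq.symm.pos
  have hts : ∀ k, 0 < t k * s k := fun k => mul_pos (htpos k) (hspos k)
  set S := ∑ k ∈ Finset.range m, 1 / (t k * s k) with hSdef
  set V := t m * s m + ε * ∑ k ∈ Finset.range m, (1 - t m * s m / (t k * s k)) with hVdef
  set r : ℝ := 1 - ε * S with hrdef
  have hsum1 : ∑ k ∈ Finset.range m, t m * s m / (t k * s k) = t m * s m * S := by
    rw [hSdef, Finset.mul_sum]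
    exact Finset.sum_congr rfl fun k _ => div_eq_mul_one_div _ _
  have hVeq : V = m * ε + t m * s m * r := by
    rw [hVdef, Finset.sum_sub_distrib, hsum1, hrdef]
    simp only [Finset.sum_const, Finset.card_range, nsmul_eq_mul, mul_one]
    ring
  have hVnn : 0 ≤ V := by
    rw [hVeq]
    have : 0 ≤ t m * s m * r := mul_nonneg (hts m).le hSm
    positivity
  set a : ℕ → ℝ := fun k => ε / (t k * s k) with hadef
  have hann : ∀ k, 0 ≤ a k := fun k => div_nonneg hε (hts k).le
  set F : ℝ → ℕ → ℝ :=
    fun e k => if k < m then (a k) ^ (1/e) else if k = m then r ^ (1/e) else 0 with hFdef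
  have hFnn : ∀ e k, 0 ≤ F e k := by
    intro e k
    simp only [F]
    split
    · exact Real.rpow_nonneg (hann k) _
    split
    · exact Real.rpow_nonneg hSm _
    · exact le_refl 0
  have hpow : ∀ (e : ℝ), 0 < e → ∀ b : ℝ, 0 ≤ b → (b ^ (1/e)) ^ e = b := by
    intro e he b hb
    rw [← Real.rpow_mul hb, one_div_mul_cancel he.ne', Real.rpow_one]
  have hFsum : ∀ e : ℝ, 0 < e → ∑ k ∈ Finset.range (m+1), (F e k) ^ e = 1 := by
    intro e he
    rw [Finset.sum_range_succ]
    have e1 : ∀ k ∈ Finset.range m, (F e k) ^ e = a k := by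
      intro k hk
      have hkm := Finset.mem_range.1 hk
      simp only [F, if_pos hkm]
      exact hpow e he (a k) (hann k)
    have e2 : (F e m) ^ e = r := by
      simp only [F]
      split_ifs with h1 h2
      all_goals first
      | exact absurd h1 (lt_irrefl _)
      | exact absurd rfl h2
      | exact hpow e he r hSm
    have e3 : ∑ k ∈ Finset.range m, a k = ε * S := by
      rw [hSdef, Finset.mul_sum, hadef]
      exact Finset.sum_congr rfl fun k _ => div_eq_mul_one_div ε _
    rw [Finset.sum_congr rfl e1, e2, e3, hrdef]
    ring
  have hFsupp : ∀ (e : ℝ) (k : ℕ), m + 1 ≤ k → F e k = 0 := by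
    intro e k hk
    simp only [F]
    rw [if_neg (by omega), if_neg (by omega)]
  set x : ℕ → ℂ := fun k => (t k : ℂ) * ((F p k : ℝ) : ℂ) with hxdef
  set y : ℕ → ℂ := fun k => (s k : ℂ) * ((F q k : ℝ) : ℂ) with hydef
  have hxmem : x ∈ WT p t :=
    ⟨fun k => ((F p k : ℝ) : ℂ), fun k => rfl,
      lqNorm_le_one_of_finsum p hp0 (F p) (hFnn p) (m+1) (hFsupp p) (le_of_eq (hFsum p hp0))⟩
  have hymem : y ∈ WT q s :=
    ⟨fun k => ((F q k : ℝ) : ℂ), fun k => rfl,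
      lqNorm_le_one_of_finsum q hq0 (F q) (hFnn q) (m+1) (hFsupp q) (le_of_eq (hFsum q hq0))⟩
  have hxmem' : (fun k => -x k) ∈ WT p t := by
    refine ⟨fun k => -((F p k : ℝ) : ℂ), fun k => by rw [hxdef]; ring, ?_⟩
    have : lqNorm p (fun k => -((F p k : ℝ) : ℂ)) = lqNorm p (fun k => ((F p k : ℝ) : ℂ)) := by
      simp [lqNorm]
    rw [this]
    exact lqNorm_le_one_of_finsum p hp0 (F p) (hFnn p) (m+1) (hFsupp p) (le_of_eq (hFsum p hp0))
  set u : ℕ → ℝ := fun k => if k < m then ε else if k = m then t m * s m * r else 0 with hudef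
  have hunn : ∀ k, 0 ≤ u k := by
    intro k
    simp only [u]
    split
    · exact hε
    split
    · exact mul_nonneg (hts m).le hSm
    · exact le_refl 0
  have hinv : 1/p + 1/q = 1 := by
    rw [one_div, one_div]
    exact hpq.inv_add_inv_eq_one
  have hbase : ∀ b : ℝ, 0 ≤ b → b ^ (1/p) * b ^ (1/q) = b := by
    intro b hb
    rw [← Real.rpow_add' hb (by rw [hinv]; norm_num), hinv, Real.rpow_one]
  have hu : ∀ k, x k * y k = ((u k : ℝ) : ℂ) := by
    intro k
    have e0 : x k * y k = ((t k * s k * (F p k * F q k) : ℝ) : ℂ) := by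
      rw [hxdef, hydef]
      push_cast
      ring
    rw [e0]
    congr 1
    rcases lt_trichotomy k m with hk | hk | hk
    · simp only [F, u, if_pos hk]
      rw [hbase (a k) (hann k), hadef]
      rw [mul_comm (t k * s k), div_mul_cancel₀ _ (hts k).ne']
    · subst hk
      simp only [F, u]
      split_ifs with h1 h2
      all_goals first
      | exact absurd h1 (lt_irrefl _)
      | exact absurd rfl h2
      | rw [hbase r hSm]
    · simp only [F, u, if_neg (by omega : ¬ k < m), if_neg (by omega : ¬ k = m)]
      ring
  have hsp : scalarProd x y = ((V : ℝ) : ℂ) := by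
    rw [scalarProd, tsum_eq_sum (s := Finset.range (m+1))
      (fun k hk => by
        rw [hu k]
        have hkm : ¬ k < m ∧ k ≠ m := by
          constructor <;> [skip; skip] <;> simp at hk <;> omega
        simp only [u, if_neg hkm.1, if_neg hkm.2, Complex.ofReal_zero])]
    have : ∑ k ∈ Finset.range (m+1), x k * y k
        = ((∑ k ∈ Finset.range (m+1), u k : ℝ) : ℂ) := by
      rw [Complex.ofReal_sum]
      exact Finset.sum_congr rfl fun k _ => hu k
    rw [this]
    congr 1
    rw [Finset.sum_range_succ]
    have e1 : ∀ k ∈ Finset.range m, u k = ε := fun k hk => by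
      simp only [u, if_pos (Finset.mem_range.1 hk)]
    rw [Finset.sum_congr rfl e1, Finset.sum_const, Finset.card_range]
    simp only [u, nsmul_eq_mul]
    split_ifs with h1 h2
    all_goals first
    | exact absurd h1 (lt_irrefl _)
    | exact absurd rfl h2
    | rw [hVeq]
  have hsp' : scalarProd (fun k => -x k) y = -((V : ℝ) : ℂ) := by
    rw [scalarProd]
    have : (fun k => -x k * y k) = fun k => -(x k * y k) := by funext k; ring
    rw [this, tsum_neg, ← scalarProd, hsp]
  set ab0 : (Fin n → ℂ) × (Fin n → ℂ) := (fun _ => 0, fun _ => 0) with hab0def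
  have hule : ∀ k : ℕ, k < n → u k ≤ ε := by
    intro k hk
    rcases lt_trichotomy k m with h1 | h1 | h1
    · simp only [u, if_pos h1]
      exact le_rfl
    · subst h1
      simp only [u]
      split_ifs with h1 h2
      all_goals first
      | exact absurd h1 (lt_irrefl _)
      | exact absurd rfl h2
      | exact hmlt hk
    · simp only [u, if_neg (by omega : ¬ k < m), if_neg (by omega : ¬ k = m)]
      exact hε
  have hab0x : ab0 ∈ infoProdSup n ε x y := by
    intro k
    simp only [ab0, mul_zero, sub_zero, hu (k : ℕ), Complex.norm_real]
    rw [Real.norm_of_nonneg (hunn _)]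
    exact hule _ k.isLt
  have hab0x' : ab0 ∈ infoProdSup n ε (fun k => -x k) y := by
    intro k
    simp only [ab0, mul_zero, sub_zero]
    have : -x (k : ℕ) * y (k : ℕ) = -(x (k : ℕ) * y (k : ℕ)) := by ring
    rw [this, norm_neg, hu (k : ℕ), Complex.norm_real, Real.norm_of_nonneg (hunn _)]
    exact hule _ k.isLt
  set z : ℂ := Ψ ab0 with hzdef
  have key : V ≤ ‖((V : ℝ) : ℂ) - z‖ ∨ V ≤ ‖-((V : ℝ) : ℂ) - z‖ := by
    by_contra hcon
    push_neg at hcon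
    obtain ⟨c1, c2⟩ := hcon
    have h1 : ‖(((V : ℝ) : ℂ) - z) - (-((V : ℝ) : ℂ) - z)‖
        ≤ ‖((V : ℝ) : ℂ) - z‖ + ‖-((V : ℝ) : ℂ) - z‖ := norm_sub_le _ _
    have e : (((V : ℝ) : ℂ) - z) - (-((V : ℝ) : ℂ) - z) = ((2 * V : ℝ) : ℂ) := by
      push_cast
      ring
    rw [e, Complex.norm_real, Real.norm_of_nonneg (by linarith)] at h1
    linarith
  rcases key with hk | hk
  · refine le_iSup₂_of_le x hxmem (le_iSup₂_of_le y hymem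
      (le_iSup₂_of_le ab0 hab0x ?_))
    rw [hsp, ← hzdef]
    calc ENNReal.ofReal V ≤ ENNReal.ofReal ‖((V : ℝ) : ℂ) - z‖ :=
          ENNReal.ofReal_le_ofReal hk
      _ = (‖((V : ℝ) : ℂ) - z‖₊ : ℝ≥0∞) := ofReal_norm _
  · refine le_iSup₂_of_le (fun k => -x k) hxmem' (le_iSup₂_of_le y hymem
      (le_iSup₂_of_le ab0 hab0x' ?_))
    rw [hsp', ← hzdef]
    calc ENNReal.ofReal V ≤ ENNReal.ofReal ‖-((V : ℝ) : ℂ) - z‖ :=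
          ENNReal.ofReal_le_ofReal hk
      _ = (‖-((V : ℝ) : ℂ) - z‖₊ : ℝ≥0∞) := ofReal_norm _

/-- optimal recovery of the scalar product on `W^{T,S}_{p,q}` from the
first `n` coordinatewise products known with an error measured in `ℓ^n_∞`. -/
theorem optimal_recovery_scalar_product_sup_error
    (n : ℕ) (hn : 1 ≤ n) (p q : ℝ) (hp : 1 < p) (hq : q = p / (p - 1))
    (t s : ℕ → ℝ) (htpos : ∀ k, 0 < t k) (htmono : Antitone t)
    (hspos : ∀ k, 0 < s k) (hsmono : Antitone s)
    (ε : ℝ) (hε : 0 ≤ ε) (m : ℕ)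
    (hm : (1 - ε * ∑ k ∈ Finset.range n, 1 / (t k * s k) ≥ 0 ∧ m = n) ∨
      (m ≤ n ∧ 1 - ε * ∑ k ∈ Finset.range m, 1 / (t k * s k) ≥ 0 ∧
        1 - ε * ∑ k ∈ Finset.range (m + 1), 1 / (t k * s k) < 0)) :
    optErrSP (WT p t) (WT q s) (infoProdSup n ε) =
      recErrSP (WT p t) (WT q s) (infoProdSup n ε) (PsiStar t s n m) ∧
    recErrSP (WT p t) (WT q s) (infoProdSup n ε) (PsiStar t s n m) =
      ENNReal.ofReal
        (t m * s m + ε * ∑ k ∈ Finset.range m, (1 - t m * s m / (t k * s k))) := by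
  have hpq : p.HolderConjugate q := (Real.holderConjugate_iff_eq_conjExponent hp).2 hq
  have hp0 : 0 < p := hpq.pos
  have hq0 : 0 < q := hpq.symm.pos
  have hts : ∀ k, 0 < t k * s k := fun k => mul_pos (htpos k) (hspos k)
  have htsmono : ∀ {j k : ℕ}, j ≤ k → t k * s k ≤ t j * s j := fun {j k} hjk =>
    mul_le_mul (htmono hjk) (hsmono hjk) (hspos k).le (htpos j).le
  have hmn : m ≤ n := by
    rcases hm with ⟨_, rfl⟩ | ⟨h, _, _⟩
    · exact le_rfl
    · exact h
  have hSm : 0 ≤ 1 - ε * ∑ k ∈ Finset.range m, 1 / (t k * s k) := by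
    rcases hm with ⟨h1, rfl⟩ | ⟨_, h2, _⟩
    · exact h1
    · exact h2
  have hmlt : m < n →
      t m * s m * (1 - ε * ∑ k ∈ Finset.range m, 1 / (t k * s k)) ≤ ε := by
    intro hlt
    rcases hm with ⟨_, rfl⟩ | ⟨_, _, h3⟩
    · exact absurd hlt (lt_irrefl _)
    · rw [Finset.sum_range_succ] at h3
      have h4 := hts m
      have h5 : 1 - ε * ∑ k ∈ Finset.range m, 1 / (t k * s k) < ε * (1 / (t m * s m)) := by
        nlinarith [h3]
      refine le_of_lt ?_
      calc t m * s m * (1 - ε * ∑ k ∈ Finset.range m, 1 / (t k * s k))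
          < t m * s m * (ε * (1 / (t m * s m))) := mul_lt_mul_of_pos_left h5 h4
        _ = ε := by field_simp; exact mul_div_cancel_left₀ ε h4.ne'
  have hV : 0 ≤ t m * s m + ε * ∑ k ∈ Finset.range m, (1 - t m * s m / (t k * s k)) := by
    have h1 : 0 ≤ ∑ k ∈ Finset.range m, (1 - t m * s m / (t k * s k)) :=
      Finset.sum_nonneg fun k hk => by
        rw [sub_nonneg]
        exact div_le_one_of_le₀ (htsmono (Finset.mem_range.1 hk).le) (hts k).le
    have h2 := mul_nonneg hε h1
    linarith [hts m]
  have hub : recErrSP (WT p t) (WT q s) (infoProdSup n ε) (PsiStar t s n m) ≤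
      ENNReal.ofReal
        (t m * s m + ε * ∑ k ∈ Finset.range m, (1 - t m * s m / (t k * s k))) := by
    refine iSup₂_le fun x hx => iSup₂_le fun y hy => iSup₂_le fun ab hab => ?_
    rw [← enorm_eq_nnnorm, ← ofReal_norm]
    exact ENNReal.ofReal_le_ofReal
      (upper_bound n p q hpq t s htpos htmono hspos hsmono ε hε m hmn x y hx hy ab hab)
  have hlb1 := lower_bound_one n p q hp0 hq0 t s htpos htmono hspos hsmono ε hε m hmn hV
  have heq : recErrSP (WT p t) (WT q s) (infoProdSup n ε) (PsiStar t s n m) =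
      ENNReal.ofReal
        (t m * s m + ε * ∑ k ∈ Finset.range m, (1 - t m * s m / (t k * s k))) :=
    le_antisymm hub hlb1
  have hlb2 : ENNReal.ofReal
        (t m * s m + ε * ∑ k ∈ Finset.range m, (1 - t m * s m / (t k * s k)))
      ≤ optErrSP (WT p t) (WT q s) (infoProdSup n ε) :=
    le_iInf fun Ψ => lower_bound_two n p q hpq t s htpos hspos ε hε m hmn hSm hmlt Ψ
  exact ⟨le_antisymm (iInf_le _ _) (heq.trans_le hlb2), heq⟩
end

section
/- Let n ∈ ℕ, 1 < p < ∞, q = p/(p−1) and r ∈ (0,1]. If ε ≤ t₁ s₁ then E(A, W^{T,S}_{p,q}, J^n_{ε,r}) = E(A, W^{T,S}_{p,q}, J^n_{ε,r}, Ψ*_n) = t_{n+1} s_{n+1} + ε (1 − t_{n+1} s_{n+1}/(t₁ s₁)); and if ε > t₁ s₁ then E(A, W^{T,S}_{p,q}, J^n_{ε,r}) = E(A, W^{T,S}_{p,q}, J^n_{ε,r}, Ψ*_0) = t₁ s₁. -/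
open scoped ENNReal NNReal BigOperators

/-- The information mapping
`J^n_{ε,r}(x,y) = {(a,b) ∈ ℂⁿ × ℂⁿ : (∑_{k=1}^n |x_k y_k − a_k b_k|^r)^{1/r} ≤ ε}`. -/
def infoProdLr (n : ℕ) (r ε : ℝ) (x y : ℕ → ℂ) : Set ((Fin n → ℂ) × (Fin n → ℂ)) :=
  {ab | (∑ k : Fin n, ‖x (k : ℕ) * y (k : ℕ) - ab.1 k * ab.2 k‖ ^ r) ^ (1 / r) ≤ ε}

/- ### Auxiliary lemmas -/

private lemma l1_le_lr {ι : Type*} (s : Finset ι) (f : ι → ℝ) (hf : ∀ i, 0 ≤ f i)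
    {r : ℝ} (hr0 : 0 < r) (hr1 : r ≤ 1) :
    ∑ i ∈ s, f i ≤ (∑ i ∈ s, f i ^ r) ^ (1 / r) := by
  classical
  have key : ∀ u : Finset ι, (∑ i ∈ u, (f i).toNNReal) ^ r ≤ ∑ i ∈ u, (f i).toNNReal ^ r := by
    intro u
    induction u using Finset.induction with
    | empty => simp [NNReal.zero_rpow hr0.ne']
    | insert _ _ hnot ih =>
      rw [Finset.sum_insert hnot, Finset.sum_insert hnot]
      exact (NNReal.rpow_add_le_add_rpow _ _ hr0.le hr1).trans (add_le_add_right ih _)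
  have key' : (∑ i ∈ s, f i) ^ r ≤ ∑ i ∈ s, f i ^ r := by
    have := key s
    have h1 : ((∑ i ∈ s, (f i).toNNReal : ℝ≥0) : ℝ) = ∑ i ∈ s, f i := by
      push_cast; exact Finset.sum_congr rfl fun i _ => Real.coe_toNNReal _ (hf i)
    have h2 : ((∑ i ∈ s, (f i).toNNReal ^ r : ℝ≥0) : ℝ) = ∑ i ∈ s, f i ^ r := by
      push_cast
      exact Finset.sum_congr rfl fun i _ => by rw [Real.coe_toNNReal _ (hf i)]
    calc (∑ i ∈ s, f i) ^ r = ((∑ i ∈ s, (f i).toNNReal : ℝ≥0) : ℝ) ^ r := by rw [h1]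
      _ = (((∑ i ∈ s, (f i).toNNReal) ^ r : ℝ≥0) : ℝ) := by rw [NNReal.coe_rpow]
      _ ≤ ((∑ i ∈ s, (f i).toNNReal ^ r : ℝ≥0) : ℝ) := by exact_mod_cast this
      _ = ∑ i ∈ s, f i ^ r := h2
  have hsum : 0 ≤ ∑ i ∈ s, f i := Finset.sum_nonneg fun i _ => hf i
  calc ∑ i ∈ s, f i = ((∑ i ∈ s, f i) ^ r) ^ (1 / r) := by
        rw [← Real.rpow_mul hsum, mul_one_div_cancel hr0.ne', Real.rpow_one]
    _ ≤ (∑ i ∈ s, f i ^ r) ^ (1 / r) :=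
        Real.rpow_le_rpow (Real.rpow_nonneg hsum r) key' (by positivity)

private lemma holder_D {p q : ℝ} (hpq : p.HolderConjugate q) {h g : ℕ → ℂ}
    (hh : lqNorm p h ≤ 1) (hg : lqNorm q g ≤ 1) :
    Summable (fun k => ‖h k‖ * ‖g k‖) ∧ ∑' k, ‖h k‖ * ‖g k‖ ≤ 1 := by
  set F : ℕ → ℝ≥0 := fun k => ‖h k‖₊ * ‖g k‖₊ with hF
  have step1 : ∑' k, (F k : ℝ≥0∞) ≤ 1 := by
    have hco : ∀ k, (F k : ℝ≥0∞) = (‖h k‖₊ : ℝ≥0∞) * (‖g k‖₊ : ℝ≥0∞) := fun k => by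
      simp [hF]
    calc ∑' k, (F k : ℝ≥0∞) = ∑' k, (‖h k‖₊ : ℝ≥0∞) * (‖g k‖₊ : ℝ≥0∞) := by
          simp_rw [hco]
      _ ≤ lqNorm p h * lqNorm q g := by
          rw [ENNReal.tsum_eq_iSup_sum]
          refine iSup_le fun u => ?_
          refine (ENNReal.inner_le_Lp_mul_Lq u _ _ hpq).trans ?_
          unfold lqNorm
          have h1 : (∑ i ∈ u, (‖h i‖₊:ℝ≥0∞)^p)^(1/p) ≤ (∑' k, (‖h k‖₊:ℝ≥0∞)^p)^(1/p) :=
            ENNReal.rpow_le_rpow (ENNReal.sum_le_tsum u) (by have := hpq.pos; positivity)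
          have h2 : (∑ i ∈ u, (‖g i‖₊:ℝ≥0∞)^q)^(1/q) ≤ (∑' k, (‖g k‖₊:ℝ≥0∞)^q)^(1/q) :=
            ENNReal.rpow_le_rpow (ENNReal.sum_le_tsum u) (by have := hpq.symm.pos; positivity)
          exact mul_le_mul' h1 h2
      _ ≤ 1 * 1 := by gcongr
      _ = 1 := one_mul 1
  have step2 : Summable F := by
    rw [← ENNReal.tsum_coe_ne_top_iff_summable]
    exact fun htop => by simp [htop] at step1
  have hco2 : ∀ k, ‖h k‖ * ‖g k‖ = (F k : ℝ) := fun k => by simp [hF]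
  constructor
  · simp_rw [hco2]; exact NNReal.summable_coe.2 step2
  · have : (∑' k, F k : ℝ≥0) ≤ 1 := by
      rw [← ENNReal.coe_le_one_iff, ENNReal.coe_tsum step2]; exact step1
    simp_rw [hco2]
    rw [← NNReal.coe_tsum]
    exact_mod_cast this

private lemma le_recErrSP_aux {Z : Type*} {W₁ W₂ : Set (ℕ → ℂ)}
    {J : (ℕ → ℂ) → (ℕ → ℂ) → Set Z} {Ψ : Z → ℂ} {x y : ℕ → ℂ}
    (hx : x ∈ W₁) (hy : y ∈ W₂) {ab : Z} (hab : ab ∈ J x y) :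
    (‖scalarProd x y - Ψ ab‖₊ : ℝ≥0∞) ≤ recErrSP W₁ W₂ J Ψ :=
  le_iSup₂_of_le x hx (le_iSup₂_of_le y hy (le_iSup₂_of_le ab hab le_rfl))

private lemma recErrSP_le_aux {Z : Type*} {W₁ W₂ : Set (ℕ → ℂ)}
    {J : (ℕ → ℂ) → (ℕ → ℂ) → Set Z} {Ψ : Z → ℂ} {C : ℝ≥0∞}
    (H : ∀ x ∈ W₁, ∀ y ∈ W₂, ∀ ab ∈ J x y, (‖scalarProd x y - Ψ ab‖₊ : ℝ≥0∞) ≤ C) :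
    recErrSP W₁ W₂ J Ψ ≤ C :=
  iSup₂_le fun x hx => iSup₂_le fun y hy => iSup₂_le fun ab hab => H x hx y hy ab hab

/-- The lower-bound construction. -/
private lemma lower_bound
    (n : ℕ) (hn : 1 ≤ n) {p q : ℝ} (hpq : p.HolderConjugate q)
    {r : ℝ} (hr0 : 0 < r)
    (t s : ℕ → ℝ) (htpos : ∀ k, 0 < t k) (hspos : ∀ k, 0 < s k)
    {ε : ℝ} (α β : ℝ) (hα : 0 ≤ α) (hβ : 0 ≤ β) (hαβ : α + β ≤ 1)
    (hinfo : t 0 * s 0 * α ≤ ε) :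
    ENNReal.ofReal (t 0 * s 0 * α + t n * s n * β) ≤
      optErrSP (WT p t) (WT q s) (infoProdLr n r ε) := by
  have hn0 : (0:ℕ) ≠ n := by omega
  have hp0 : 0 < p := hpq.pos
  have hq0 : 0 < q := hpq.symm.pos
  set H : ℝ → ℕ → ℂ := fun u k =>
    if k = 0 then ((α ^ u : ℝ) : ℂ) else if k = n then ((β ^ u : ℝ) : ℂ) else 0 with hHdef
  -- the ℓ_u norm of H (1/u)
  have claim : ∀ u : ℝ, 0 < u → lqNorm u (H (1/u)) ≤ 1 := by
    intro u hu
    have hterm : ∀ γ : ℝ, 0 ≤ γ → ((‖((γ ^ (1/u) : ℝ) : ℂ)‖₊ : ℝ≥0∞)) ^ u = ENNReal.ofReal γ := by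
      intro γ hγ
      rw [Complex.nnnorm_real, ← enorm_eq_nnnorm, Real.enorm_eq_ofReal (Real.rpow_nonneg hγ _),
        ENNReal.ofReal_rpow_of_nonneg (Real.rpow_nonneg hγ _) hu.le,
        ← Real.rpow_mul hγ, one_div_mul_cancel hu.ne', Real.rpow_one]
    have htsum : ∑' k, (‖H (1/u) k‖₊ : ℝ≥0∞) ^ u = ENNReal.ofReal α + ENNReal.ofReal β := by
      rw [tsum_eq_sum (s := ({0, n} : Finset ℕ))
        (by
          intro b hb
          simp only [Finset.mem_insert, Finset.mem_singleton, not_or] at hb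
          simp only [hHdef, if_neg hb.1, if_neg hb.2, nnnorm_zero, ENNReal.coe_zero]
          exact ENNReal.zero_rpow_of_pos hu)]
      rw [Finset.sum_pair hn0]
      congr 1
      · simp only [hHdef, if_pos rfl]
        exact hterm α hα
      · simp only [hHdef, if_neg (Ne.symm hn0), if_pos rfl]
        exact hterm β hβ
    unfold lqNorm
    rw [htsum, ← ENNReal.ofReal_add hα hβ]
    calc (ENNReal.ofReal (α + β)) ^ (1/u) ≤ (ENNReal.ofReal 1) ^ (1/u) :=
          ENNReal.rpow_le_rpow (ENNReal.ofReal_le_ofReal hαβ) (by positivity)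
      _ = 1 := by rw [ENNReal.ofReal_one, ENNReal.one_rpow]
  set x : ℕ → ℂ := fun k => (t k : ℂ) * H (1/p) k with hxdef
  set y : ℕ → ℂ := fun k => (s k : ℂ) * H (1/q) k with hydef
  have hx : x ∈ WT p t := ⟨H (1/p), fun k => rfl, claim p hp0⟩
  have hy : y ∈ WT q s := ⟨H (1/q), fun k => rfl, claim q hq0⟩
  have hx' : (fun k => -x k) ∈ WT p t := by
    refine ⟨fun k => -H (1/p) k, fun k => by show -x k = (t k:ℂ) * (-H (1/p) k); rw [hxdef]; ring, ?_⟩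
    have : lqNorm p (fun k => -H (1/p) k) = lqNorm p (H (1/p)) := by
      unfold lqNorm; simp
    rw [this]; exact claim p hp0
  have hsum1 : 1/p + 1/q = 1 := by
    simpa [one_div] using hpq.inv_add_inv_eq_one
  have hmul : ∀ γ : ℝ, 0 ≤ γ → γ ^ (1/p) * γ ^ (1/q) = γ := by
    intro γ hγ
    rw [← Real.rpow_add' hγ (by rw [hsum1]; norm_num), hsum1, Real.rpow_one]
  have hxy : ∀ k, x k * y k =
      if k = 0 then ((t 0 * s 0 * α : ℝ) : ℂ) else if k = n then ((t n * s n * β : ℝ) : ℂ) else 0 := by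
    intro k
    by_cases h0 : k = 0
    · subst h0
      have hre : t 0 * (α ^ (1/p)) * (s 0 * (α ^ (1/q))) = t 0 * s 0 * α := by
        calc t 0 * (α ^ (1/p)) * (s 0 * (α ^ (1/q)))
            = t 0 * s 0 * (α ^ (1/p) * α ^ (1/q)) := by ring
          _ = t 0 * s 0 * α := by rw [hmul α hα]
      simp only [hxdef, hydef, hHdef, if_pos rfl]
      rw [← hre]; push_cast; ring
    · by_cases hkn : k = n
      · subst hkn
        have hre : t k * (β ^ (1/p)) * (s k * (β ^ (1/q))) = t k * s k * β := by
          calc t k * (β ^ (1/p)) * (s k * (β ^ (1/q)))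
              = t k * s k * (β ^ (1/p) * β ^ (1/q)) := by ring
            _ = t k * s k * β := by rw [hmul β hβ]
        simp only [hxdef, hydef, hHdef, if_neg h0, if_pos rfl]
        rw [← hre]; push_cast; ring
      · simp [hxdef, hydef, hHdef, h0, hkn]
  set V := t 0 * s 0 * α + t n * s n * β with hVdef
  have hV : scalarProd x y = ((V : ℝ) : ℂ) := by
    unfold scalarProd
    rw [tsum_eq_sum (s := ({0, n} : Finset ℕ))
      (by
        intro b hb
        simp only [Finset.mem_insert, Finset.mem_singleton, not_or] at hb
        rw [hxy b, if_neg hb.1, if_neg hb.2])]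
    rw [Finset.sum_pair hn0, hxy 0, hxy n, if_pos rfl, if_neg (Ne.symm hn0), if_pos rfl]
    push_cast [hVdef]; ring
  have hV0 : 0 ≤ V := by
    have h1 := (htpos 0).le; have h2 := (hspos 0).le
    have h3 := (htpos n).le; have h4 := (hspos n).le
    have : 0 ≤ t 0 * s 0 * α := by positivity
    have : 0 ≤ t n * s n * β := by positivity
    rw [hVdef]; linarith
  have hsum_eq : ∀ w : ℕ → ℂ, (∀ k, ‖w k‖ = ‖x k * y k‖) →
      (∑ k : Fin n, ‖w (k:ℕ)‖ ^ r) = (t 0 * s 0 * α) ^ r := by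
    intro w hw
    rw [Finset.sum_eq_single_of_mem (⟨0, hn⟩ : Fin n) (Finset.mem_univ _)]
    · rw [hw 0, hxy 0, if_pos rfl, Complex.norm_real, Real.norm_eq_abs,
        abs_of_nonneg (mul_nonneg (mul_nonneg (htpos 0).le (hspos 0).le) hα)]
    · intro b _ hb
      have hb1 : (b:ℕ) ≠ 0 := fun hc => hb (Fin.ext hc)
      have hb2 : (b:ℕ) ≠ n := Nat.ne_of_lt b.2
      rw [hw b, hxy (b:ℕ), if_neg hb1, if_neg hb2]
      simp [Real.zero_rpow hr0.ne']
  have hrpow : ((t 0 * s 0 * α) ^ r) ^ (1/r) = t 0 * s 0 * α := by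
    rw [← Real.rpow_mul (mul_nonneg (mul_nonneg (htpos 0).le (hspos 0).le) hα),
      mul_one_div_cancel hr0.ne', Real.rpow_one]
  have hinfo1 : ((0,0) : (Fin n → ℂ) × (Fin n → ℂ)) ∈ infoProdLr n r ε x y := by
    show (∑ k : Fin n, ‖x (k:ℕ) * y (k:ℕ) - (0:Fin n → ℂ) k * (0:Fin n → ℂ) k‖ ^ r) ^ (1/r) ≤ ε
    simp only [Pi.zero_apply, mul_zero, sub_zero]
    rw [hsum_eq (fun k => x k * y k) (fun k => rfl), hrpow]
    exact hinfo
  have hinfo2 : ((0,0) : (Fin n → ℂ) × (Fin n → ℂ)) ∈ infoProdLr n r ε (fun k => -x k) y := by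
    show (∑ k : Fin n, ‖-x (k:ℕ) * y (k:ℕ) - (0:Fin n → ℂ) k * (0:Fin n → ℂ) k‖ ^ r) ^ (1/r) ≤ ε
    simp only [Pi.zero_apply, mul_zero, sub_zero]
    rw [hsum_eq (fun k => -x k * y k)
      (fun k => by show ‖-x k * y k‖ = ‖x k * y k‖; rw [neg_mul, norm_neg]), hrpow]
    exact hinfo
  have hVneg : scalarProd (fun k => -x k) y = -((V : ℝ) : ℂ) := by
    unfold scalarProd
    calc ∑' k, (-x k) * y k = ∑' k, -(x k * y k) := by simp [neg_mul]
      _ = -(∑' k, x k * y k) := tsum_neg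
      _ = -((V : ℝ) : ℂ) := by rw [show (∑' k, x k * y k) = ((V : ℝ) : ℂ) from hV]
  refine le_iInf fun Ψ => ?_
  set z := Ψ (0, 0) with hz
  have A := le_recErrSP_aux (Ψ := Ψ) hx hy hinfo1
  have B := le_recErrSP_aux (Ψ := Ψ) hx' hy hinfo2
  rw [hV] at A
  rw [hVneg] at B
  have hnormB : ‖-((V:ℝ):ℂ) - z‖ = ‖((V:ℝ):ℂ) + z‖ := by
    rw [show -((V:ℝ):ℂ) - z = -(((V:ℝ):ℂ) + z) by ring, norm_neg]
  have h2V : 2 * V ≤ ‖((V:ℝ):ℂ) - z‖ + ‖((V:ℝ):ℂ) + z‖ := by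
    have heq : (((V:ℝ):ℂ) - z) + (((V:ℝ):ℂ) + z) = ((2 * V : ℝ) : ℂ) := by push_cast; ring
    calc 2 * V = ‖(((V:ℝ):ℂ) - z) + (((V:ℝ):ℂ) + z)‖ := by
          rw [heq, Complex.norm_real, Real.norm_eq_abs, abs_of_nonneg (by linarith)]
      _ ≤ _ := norm_add_le _ _
  rcases le_total ‖((V:ℝ):ℂ) - z‖ ‖((V:ℝ):ℂ) + z‖ with hc | hc
  · calc ENNReal.ofReal V ≤ ENNReal.ofReal ‖-((V:ℝ):ℂ) - z‖ := by
          rw [hnormB]; exact ENNReal.ofReal_le_ofReal (by linarith)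
      _ = (‖-((V:ℝ):ℂ) - z‖₊ : ℝ≥0∞) := ofReal_norm _
      _ ≤ _ := B
  · calc ENNReal.ofReal V ≤ ENNReal.ofReal ‖((V:ℝ):ℂ) - z‖ :=
          ENNReal.ofReal_le_ofReal (by linarith)
      _ = (‖((V:ℝ):ℂ) - z‖₊ : ℝ≥0∞) := ofReal_norm _
      _ ≤ _ := A

private lemma norm_prod_eq {t s : ℕ → ℝ} (htpos : ∀ k, 0 < t k) (hspos : ∀ k, 0 < s k)
    {x y h g : ℕ → ℂ} (hxh : ∀ k, x k = (t k : ℂ) * h k) (hyg : ∀ k, y k = (s k : ℂ) * g k)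
    (k : ℕ) : ‖x k * y k‖ = t k * s k * (‖h k‖ * ‖g k‖) := by
  rw [hxh, hyg]
  rw [norm_mul, norm_mul, norm_mul, Complex.norm_real, Complex.norm_real, Real.norm_eq_abs,
    Real.norm_eq_abs, abs_of_pos (htpos k), abs_of_pos (hspos k)]
  ring

private lemma upper0 {p q : ℝ} (hpq : p.HolderConjugate q) (n : ℕ) {r ε : ℝ}
    (t s : ℕ → ℝ) (htpos : ∀ k, 0 < t k) (htmono : Antitone t)
    (hspos : ∀ k, 0 < s k) (hsmono : Antitone s) :
    recErrSP (WT p t) (WT q s) (infoProdLr n r ε) (PsiStar t s n 0) ≤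
      ENNReal.ofReal (t 0 * s 0) := by
  refine recErrSP_le_aux ?_
  rintro x ⟨h, hxh, hh⟩ y ⟨g, hyg, hg⟩ ab -
  obtain ⟨hDs, hD1⟩ := holder_D hpq hh hg
  have hPsi : PsiStar t s n 0 ab = 0 := Finset.sum_eq_zero fun k _ => if_neg (Nat.not_lt_zero _)
  rw [hPsi, sub_zero, ← enorm_eq_nnnorm, ← ofReal_norm]
  refine ENNReal.ofReal_le_ofReal ?_
  have hbound : ∀ k, ‖x k * y k‖ ≤ t 0 * s 0 * (‖h k‖ * ‖g k‖) := by
    intro k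
    rw [norm_prod_eq htpos hspos hxh hyg k]
    exact mul_le_mul_of_nonneg_right
      (mul_le_mul (htmono (Nat.zero_le k)) (hsmono (Nat.zero_le k)) (hspos k).le (htpos 0).le)
      (by positivity)
  have hnormsum : Summable (fun k => ‖x k * y k‖) :=
    Summable.of_nonneg_of_le (fun k => norm_nonneg _) hbound (hDs.mul_left _)
  calc ‖scalarProd x y‖ ≤ ∑' k, ‖x k * y k‖ := norm_tsum_le_tsum_norm hnormsum
    _ ≤ ∑' k, t 0 * s 0 * (‖h k‖ * ‖g k‖) := Summable.tsum_le_tsum hbound hnormsum (hDs.mul_left _)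
    _ = (t 0 * s 0) * ∑' k, ‖h k‖ * ‖g k‖ := tsum_mul_left
    _ ≤ (t 0 * s 0) * 1 :=
        mul_le_mul_of_nonneg_left hD1 (mul_nonneg (htpos 0).le (hspos 0).le)
    _ = t 0 * s 0 := mul_one _

private lemma upper1 (n : ℕ) {p q : ℝ} (hpq : p.HolderConjugate q)
    {r : ℝ} (hr0 : 0 < r) (hr1 : r ≤ 1) (t s : ℕ → ℝ)
    (htpos : ∀ k, 0 < t k) (htmono : Antitone t)
    (hspos : ∀ k, 0 < s k) (hsmono : Antitone s) {ε : ℝ} (hε : 0 ≤ ε) :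
    recErrSP (WT p t) (WT q s) (infoProdLr n r ε) (PsiStar t s n n) ≤
      ENNReal.ofReal (t n * s n + ε * (1 - t n * s n / (t 0 * s 0))) := by
  have hts0 : 0 < t 0 * s 0 := mul_pos (htpos 0) (hspos 0)
  refine recErrSP_le_aux ?_
  rintro x ⟨h, hxh, hh⟩ y ⟨g, hyg, hg⟩ ab hab
  obtain ⟨hDs, hD1⟩ := holder_D hpq hh hg
  simp only [infoProdLr, Set.mem_setOf_eq] at hab
  set c := t n * s n with hcdef
  have hc0 : 0 < c := mul_pos (htpos n) (hspos n)
  set D : ℕ → ℝ := fun k => ‖h k‖ * ‖g k‖ with hDdef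
  have hDnn : ∀ k, 0 ≤ D k := fun k => by positivity
  have hxyk : ∀ k, ‖x k * y k‖ = t k * s k * D k :=
    norm_prod_eq htpos hspos hxh hyg
  have hbound : ∀ k, ‖x k * y k‖ ≤ t 0 * s 0 * D k := by
    intro k
    rw [hxyk k]
    exact mul_le_mul_of_nonneg_right
      (mul_le_mul (htmono (Nat.zero_le k)) (hsmono (Nat.zero_le k)) (hspos k).le (htpos 0).le)
      (hDnn k)
  have hnormsum : Summable (fun k => ‖x k * y k‖) :=
    Summable.of_nonneg_of_le (fun k => norm_nonneg _) hbound (hDs.mul_left _)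
  have hsumxy : Summable (fun k => x k * y k) :=
    Summable.of_norm hnormsum
  -- weights
  have hcle : ∀ k : ℕ, k ≤ n → c ≤ t k * s k := fun k hk =>
    mul_le_mul (htmono hk) (hsmono hk) (hspos n).le (htpos k).le
  have hkle : ∀ k : ℕ, t k * s k ≤ t 0 * s 0 := fun k =>
    mul_le_mul (htmono (Nat.zero_le k)) (hsmono (Nat.zero_le k)) (hspos k).le (htpos 0).le
  -- decomposition
  have hsplit : scalarProd x y - PsiStar t s n n ab =
      (∑ k : Fin n, ((x (k:ℕ) * y (k:ℕ) - ab.1 k * ab.2 k) * ((1 - c / (t (k:ℕ) * s (k:ℕ)) : ℝ) : ℂ)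
        + x (k:ℕ) * y (k:ℕ) * ((c / (t (k:ℕ) * s (k:ℕ)) : ℝ) : ℂ)))
      + ∑' j, x (j + n) * y (j + n) := by
    have h1 : scalarProd x y
        = ∑ k ∈ Finset.range n, x k * y k + ∑' j, x (j + n) * y (j + n) :=
      (hsumxy.sum_add_tsum_nat_add n).symm
    have h2 : PsiStar t s n n ab
        = ∑ k : Fin n, ab.1 k * ab.2 k * ((1 - c / (t (k:ℕ) * s (k:ℕ)) : ℝ) : ℂ) :=
      Finset.sum_congr rfl fun k _ => if_pos k.2
    rw [h1, h2, ← Fin.sum_univ_eq_sum_range (fun k => x k * y k) n,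
      add_sub_right_comm, ← Finset.sum_sub_distrib]
    congr 1
    refine Finset.sum_congr rfl fun k _ => ?_
    have hWC : ((1 - c / (t (k:ℕ) * s (k:ℕ)) : ℝ) : ℂ)
        = 1 - ((c / (t (k:ℕ) * s (k:ℕ)) : ℝ) : ℂ) := by push_cast; ring
    rw [hWC]; ring
  rw [← enorm_eq_nnnorm, ← ofReal_norm]
  refine ENNReal.ofReal_le_ofReal ?_
  rw [hsplit]
  -- pointwise bound on the finite-sum terms
  set e : Fin n → ℝ := fun k => ‖x (k:ℕ) * y (k:ℕ) - ab.1 k * ab.2 k‖ with hedef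
  have henn : ∀ k : Fin n, 0 ≤ e k := fun k => norm_nonneg _
  have hterm : ∀ k : Fin n,
      ‖(x (k:ℕ) * y (k:ℕ) - ab.1 k * ab.2 k) * ((1 - c / (t (k:ℕ) * s (k:ℕ)) : ℝ) : ℂ)
        + x (k:ℕ) * y (k:ℕ) * ((c / (t (k:ℕ) * s (k:ℕ)) : ℝ) : ℂ)‖
      ≤ e k * (1 - c / (t 0 * s 0)) + c * D (k:ℕ) := by
    intro k
    have hts : 0 < t (k:ℕ) * s (k:ℕ) := mul_pos (htpos _) (hspos _)
    have hck : c ≤ t (k:ℕ) * s (k:ℕ) := hcle _ (le_of_lt k.2)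
    have hw1 : c / (t (k:ℕ) * s (k:ℕ)) ≤ 1 := (div_le_one hts).2 hck
    have hw2 : c / (t 0 * s 0) ≤ c / (t (k:ℕ) * s (k:ℕ)) := div_le_div_of_nonneg_left hc0.le hts (hkle _)
    refine (norm_add_le _ _).trans ?_
    have hA : ‖(x (k:ℕ) * y (k:ℕ) - ab.1 k * ab.2 k) * ((1 - c / (t (k:ℕ) * s (k:ℕ)) : ℝ) : ℂ)‖
        ≤ e k * (1 - c / (t 0 * s 0)) := by
      rw [norm_mul, Complex.norm_real, Real.norm_eq_abs, abs_of_nonneg (by linarith)]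
      exact mul_le_mul_of_nonneg_left (by linarith) (henn k)
    have hB : ‖x (k:ℕ) * y (k:ℕ) * ((c / (t (k:ℕ) * s (k:ℕ)) : ℝ) : ℂ)‖ = c * D (k:ℕ) := by
      rw [norm_mul, Complex.norm_real, Real.norm_eq_abs,
        abs_of_nonneg (by positivity), hxyk]
      field_simp [(htpos (k:ℕ)).ne', (hspos (k:ℕ)).ne']
    rw [hB]
    exact add_le_add_left hA _
  -- tail bound
  have hDtail : Summable (fun j => D (j + n)) := (summable_nat_add_iff n).2 hDs
  have hntail : Summable (fun j => ‖x (j + n) * y (j + n)‖) :=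
    (summable_nat_add_iff n).2 hnormsum
  have htail : ‖∑' j, x (j + n) * y (j + n)‖ ≤ c * ∑' j, D (j + n) := by
    have hb : ∀ j, ‖x (j + n) * y (j + n)‖ ≤ c * D (j + n) := by
      intro j
      rw [hxyk]
      exact mul_le_mul_of_nonneg_right
        (mul_le_mul (htmono (Nat.le_add_left n j)) (hsmono (Nat.le_add_left n j))
          (hspos _).le (htpos n).le) (hDnn _)
    calc ‖∑' j, x (j + n) * y (j + n)‖ ≤ ∑' j, ‖x (j + n) * y (j + n)‖ :=
          norm_tsum_le_tsum_norm hntail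
      _ ≤ ∑' j, c * D (j + n) := Summable.tsum_le_tsum hb hntail (hDtail.mul_left _)
      _ = c * ∑' j, D (j + n) := tsum_mul_left
  -- ℓ1 vs ℓr bound on the information error
  have he_l1 : ∑ k : Fin n, e k ≤ ε :=
    (l1_le_lr Finset.univ e henn hr0 hr1).trans hab
  -- put it together
  have hwnn : 0 ≤ 1 - c / (t 0 * s 0) := by
    have : c / (t 0 * s 0) ≤ 1 := (div_le_one hts0).2 ((hcle 0 (Nat.zero_le n)).trans_eq rfl)
    linarith
  calc ‖(∑ k : Fin n, ((x (k:ℕ) * y (k:ℕ) - ab.1 k * ab.2 k) * ((1 - c / (t (k:ℕ) * s (k:ℕ)) : ℝ) : ℂ)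
        + x (k:ℕ) * y (k:ℕ) * ((c / (t (k:ℕ) * s (k:ℕ)) : ℝ) : ℂ)))
      + ∑' j, x (j + n) * y (j + n)‖
      ≤ ‖∑ k : Fin n, ((x (k:ℕ) * y (k:ℕ) - ab.1 k * ab.2 k) * ((1 - c / (t (k:ℕ) * s (k:ℕ)) : ℝ) : ℂ)
        + x (k:ℕ) * y (k:ℕ) * ((c / (t (k:ℕ) * s (k:ℕ)) : ℝ) : ℂ))‖
        + ‖∑' j, x (j + n) * y (j + n)‖ := norm_add_le _ _
    _ ≤ (∑ k : Fin n, (e k * (1 - c / (t 0 * s 0)) + c * D (k:ℕ)))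
        + c * ∑' j, D (j + n) := by
        refine add_le_add ((norm_sum_le _ _).trans (Finset.sum_le_sum fun k _ => hterm k)) htail
    _ = (1 - c / (t 0 * s 0)) * (∑ k : Fin n, e k)
        + c * ((∑ k ∈ Finset.range n, D k) + ∑' j, D (j + n)) := by
        rw [Finset.sum_add_distrib, ← Finset.mul_sum, ← Finset.sum_mul,
          Fin.sum_univ_eq_sum_range (fun k => D k) n]
        ring
    _ ≤ (1 - c / (t 0 * s 0)) * ε + c * 1 := by
        have h1 : (1 - c / (t 0 * s 0)) * (∑ k : Fin n, e k) ≤ (1 - c / (t 0 * s 0)) * ε :=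
          mul_le_mul_of_nonneg_left he_l1 hwnn
        have h2 : (∑ k ∈ Finset.range n, D k) + ∑' j, D (j + n) = ∑' k, D k :=
          hDs.sum_add_tsum_nat_add n
        have h3 : c * ((∑ k ∈ Finset.range n, D k) + ∑' j, D (j + n)) ≤ c * 1 := by
          rw [h2]; exact mul_le_mul_of_nonneg_left hD1 hc0.le
        linarith
    _ = c + ε * (1 - c / (t 0 * s 0)) := by ring

/-- optimal recovery of the scalar product on `W^{T,S}_{p,q}` from the
first `n` coordinatewise products known with an error measured in `ℓ^n_r`, `0 < r ≤ 1`
(0-based: `t 0 * s 0` is the paper's `t₁s₁`, `t n * s n` is `t_{n+1}s_{n+1}`). -/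
theorem optimal_recovery_scalar_product_lr_error_small_r
    (n : ℕ) (hn : 1 ≤ n) (p q : ℝ) (hp : 1 < p) (hq : q = p / (p - 1))
    (r : ℝ) (hr0 : 0 < r) (hr1 : r ≤ 1)
    (t s : ℕ → ℝ) (htpos : ∀ k, 0 < t k) (htmono : Antitone t)
    (hspos : ∀ k, 0 < s k) (hsmono : Antitone s)
    (ε : ℝ) (hε : 0 ≤ ε) :
    (ε ≤ t 0 * s 0 →
      optErrSP (WT p t) (WT q s) (infoProdLr n r ε) =
        recErrSP (WT p t) (WT q s) (infoProdLr n r ε) (PsiStar t s n n) ∧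
      recErrSP (WT p t) (WT q s) (infoProdLr n r ε) (PsiStar t s n n) =
        ENNReal.ofReal (t n * s n + ε * (1 - t n * s n / (t 0 * s 0)))) ∧
    (t 0 * s 0 < ε →
      optErrSP (WT p t) (WT q s) (infoProdLr n r ε) =
        recErrSP (WT p t) (WT q s) (infoProdLr n r ε) (PsiStar t s n 0) ∧
      recErrSP (WT p t) (WT q s) (infoProdLr n r ε) (PsiStar t s n 0) =
        ENNReal.ofReal (t 0 * s 0)) := by
  have hpq : p.HolderConjugate q := (Real.holderConjugate_iff_eq_conjExponent hp).2 hq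
  have hts0 : 0 < t 0 * s 0 := mul_pos (htpos 0) (hspos 0)
  constructor
  · -- case ε ≤ t₁s₁
    intro hle
    have hup := upper1 n hpq hr0 hr1 t s htpos htmono hspos hsmono hε
    have hα0 : 0 ≤ ε / (t 0 * s 0) := div_nonneg hε hts0.le
    have hα1 : ε / (t 0 * s 0) ≤ 1 := (div_le_one hts0).2 hle
    have hlow := lower_bound n hn hpq hr0 t s htpos hspos (ε := ε)
      (ε / (t 0 * s 0)) (1 - ε / (t 0 * s 0)) hα0 (by linarith) (by linarith)
      (le_of_eq (mul_div_cancel₀ ε hts0.ne'))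
    have heq : t 0 * s 0 * (ε / (t 0 * s 0)) + t n * s n * (1 - ε / (t 0 * s 0))
        = t n * s n + ε * (1 - t n * s n / (t 0 * s 0)) := by
      field_simp [(htpos 0).ne', (hspos 0).ne']
      ring
    rw [heq] at hlow
    have hinf_le : optErrSP (WT p t) (WT q s) (infoProdLr n r ε) ≤
        recErrSP (WT p t) (WT q s) (infoProdLr n r ε) (PsiStar t s n n) := iInf_le _ _
    exact ⟨le_antisymm hinf_le (hup.trans hlow),
      le_antisymm hup (hlow.trans hinf_le)⟩
  · -- case t₁s₁ < ε
    intro hlt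
    have hup := upper0 hpq n (r := r) (ε := ε) t s htpos htmono hspos hsmono
    have hlow := lower_bound n hn hpq hr0 t s htpos hspos (ε := ε)
      1 0 zero_le_one le_rfl (by norm_num) (by rw [mul_one]; exact hlt.le)
    have heq : t 0 * s 0 * 1 + t n * s n * 0 = t 0 * s 0 := by ring
    rw [heq] at hlow
    have hinf_le : optErrSP (WT p t) (WT q s) (infoProdLr n r ε) ≤
        recErrSP (WT p t) (WT q s) (infoProdLr n r ε) (PsiStar t s n 0) := iInf_le _ _
    exact ⟨le_antisymm hinf_le (hup.trans hlow),
      le_antisymm hup (hlow.trans hinf_le)⟩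
end

section
/- Let 1 < r < ∞, n ∈ ℕ, and let (t_k) and (s_k) be positive sequences such that the sequence (t_k s_k) is strictly decreasing. For m = 1,…,n define τ_{j,m} = (1 − t_{m+1} s_{m+1}/(t_j s_j))^{1/(r−1)} for j = 1,…,m, and set d₁ = t₁ s₁ and, for m ≥ 2, d_m = ( Σ_{j=1}^{m} τ_{j,m}^r )^{1/r} · ( Σ_{j=1}^{m} τ_{j,m}/(t_j s_j) )^{−1}. Then the finite sequence d₁ ≥ d₂ ≥ … ≥ d_n is non-increasing. -/
open scoped BigOperators
open Finset

/-- The constants `d_m`: `d₁ = t₁s₁` and, for `m ≥ 2`,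
`d_m = (∑_{j=1}^m τ_{j,m}^r)^{1/r} · (∑_{j=1}^m τ_{j,m}/(t_j s_j))^{−1}`, where
`τ_{j,m} = (1 − t_{m+1}s_{m+1}/(t_j s_j))^{1/(r−1)}` (0-based indexing:
`t k * s k` is the paper's `t_{k+1}s_{k+1}`). -/
noncomputable def dSeq (r : ℝ) (t s : ℕ → ℝ) : ℕ → ℝ := fun m =>
  if m = 1 then t 0 * s 0 else
    (∑ j ∈ Finset.range m,
        ((1 - t m * s m / (t j * s j)) ^ (1 / (r - 1))) ^ r) ^ (1 / r) *
    (∑ j ∈ Finset.range m,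
        (1 - t m * s m / (t j * s j)) ^ (1 / (r - 1)) / (t j * s j))⁻¹

/-- Monotonicity of the auxiliary function
`F x = (∑_{j≤m} ((1-x/a_j)^{1/(r-1)})^r)^{1/r} · (∑_{j≤m} (1-x/a_j)^{1/(r-1)}/a_j)⁻¹`
on the interval `[a_{m+1}, a_m]`. -/
lemma F_monoOn (r : ℝ) (hr : 1 < r) (a : ℕ → ℝ) (hpos : ∀ k, 0 < a k)
    (ha : StrictAnti a) (m : ℕ) (hm : 1 ≤ m) :
    MonotoneOn (fun x =>
      (∑ j ∈ Finset.range (m + 1), ((1 - x / a j) ^ (1 / (r - 1))) ^ r) ^ (1 / r) *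
      (∑ j ∈ Finset.range (m + 1), (1 - x / a j) ^ (1 / (r - 1)) / a j)⁻¹)
      (Set.Icc (a (m + 1)) (a m)) := by
  have hr0 : (0 : ℝ) < r := lt_trans one_pos hr
  have hr1 : (0 : ℝ) < r - 1 := sub_pos.mpr hr
  set p : ℝ := 1 / (r - 1) with hp_def
  have hp : 0 < p := by positivity
  have hpr : p * (r - 1) = 1 := by rw [hp_def]; exact one_div_mul_cancel hr1.ne'
  have hpr' : p * r = p + 1 := by linear_combination hpr
  set A := a (m + 1) with hA_def
  set B := a m with hB_def
  have hAB : A < B := ha (Nat.lt_succ_self m)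
  have haj : ∀ j, j ≤ m → B ≤ a j := fun j hj => ha.antitone hj
  have hu_nonneg : ∀ x ∈ Set.Icc A B, ∀ j ∈ Finset.range (m + 1), 0 ≤ 1 - x / a j := by
    intro x hx j hj
    have hj' : j ≤ m := Nat.lt_succ_iff.mp (Finset.mem_range.mp hj)
    have h1 : x ≤ a j := le_trans hx.2 (haj j hj')
    have := (div_le_one (hpos j)).mpr h1
    linarith
  have hu_pos : ∀ x, x < B → ∀ j ∈ Finset.range (m + 1), 0 < 1 - x / a j := by
    intro x hx j hj
    have hj' : j ≤ m := Nat.lt_succ_iff.mp (Finset.mem_range.mp hj)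
    have h1 : x < a j := lt_of_lt_of_le hx (haj j hj')
    have := (div_lt_one (hpos j)).mpr h1
    linarith
  have hu0_pos : ∀ x ∈ Set.Icc A B, 0 < 1 - x / a 0 := by
    intro x hx
    have h1 : x < a 0 := lt_of_le_of_lt hx.2 (ha (by omega : 0 < m))
    have := (div_lt_one (hpos 0)).mpr h1
    linarith
  set S : ℝ → ℝ := fun x => ∑ j ∈ Finset.range (m + 1), ((1 - x / a j) ^ p) ^ r with hS_def
  set T : ℝ → ℝ := fun x => ∑ j ∈ Finset.range (m + 1), (1 - x / a j) ^ p / a j with hT_def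
  set W : ℝ → ℝ :=
    fun x => ∑ j ∈ Finset.range (m + 1), (1 - x / a j) ^ (p - 1) * ((a j)⁻¹) ^ 2 with hW_def
  show MonotoneOn (fun x => S x ^ (1 / r) * (T x)⁻¹) (Set.Icc A B)
  have hS_pos : ∀ x ∈ Set.Icc A B, 0 < S x := by
    intro x hx
    apply Finset.sum_pos'
    · intro j hj
      exact Real.rpow_nonneg (Real.rpow_nonneg (hu_nonneg x hx j hj) p) r
    · exact ⟨0, Finset.mem_range.mpr (by omega),
        Real.rpow_pos_of_pos (Real.rpow_pos_of_pos (hu0_pos x hx) p) r⟩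
  have hT_pos : ∀ x ∈ Set.Icc A B, 0 < T x := by
    intro x hx
    apply Finset.sum_pos'
    · intro j hj
      exact div_nonneg (Real.rpow_nonneg (hu_nonneg x hx j hj) p) (hpos j).le
    · exact ⟨0, Finset.mem_range.mpr (by omega),
        div_pos (Real.rpow_pos_of_pos (hu0_pos x hx) p) (hpos 0)⟩
  have hSderiv : ∀ x ∈ Set.Ioo A B, HasDerivAt S (-(r * p) * T x) x := by
    intro x hx
    have key : HasDerivAt S
        (∑ j ∈ Finset.range (m + 1), -(r * p) * ((1 - x / a j) ^ p / a j)) x := by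
      apply HasDerivAt.fun_sum
      intro j hj
      have hu : 0 < 1 - x / a j := hu_pos x hx.2 j hj
      have hg : HasDerivAt (fun y : ℝ => 1 - y / a j) (-(a j)⁻¹) x := by
        simpa [one_div] using ((hasDerivAt_id x).div_const (a j)).const_sub 1
      have h1 : HasDerivAt (fun y : ℝ => (1 - y / a j) ^ p)
          (-(a j)⁻¹ * p * (1 - x / a j) ^ (p - 1)) x := hg.rpow_const (Or.inl hu.ne')
      have h2 := h1.rpow_const (p := r) (Or.inl (Real.rpow_pos_of_pos hu p).ne')
      convert h2 using 1
      case e'_4 => rfl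
      case e'_5 => rfl
      have e1 : ((1 - x / a j) ^ p) ^ (r - 1) = 1 - x / a j := by
        rw [← Real.rpow_mul hu.le, hpr, Real.rpow_one]
      rw [e1]
      have e2 : (1 - x / a j) * (1 - x / a j) ^ (p - 1) = (1 - x / a j) ^ p := by
        have h := (Real.rpow_add hu 1 (p - 1)).symm
        rw [Real.rpow_one, show (1 : ℝ) + (p - 1) = p by ring] at h
        exact h
      rw [← e2]
      ring
    have : -(r * p) * T x = ∑ j ∈ Finset.range (m + 1), -(r * p) * ((1 - x / a j) ^ p / a j) := by
      rw [hT_def, Finset.mul_sum]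
    rw [this]
    exact key
  have hTderiv : ∀ x ∈ Set.Ioo A B, HasDerivAt T (-(p * W x)) x := by
    intro x hx
    have key : HasDerivAt T
        (∑ j ∈ Finset.range (m + 1), -(p * ((1 - x / a j) ^ (p - 1) * ((a j)⁻¹) ^ 2))) x := by
      apply HasDerivAt.fun_sum
      intro j hj
      have hu : 0 < 1 - x / a j := hu_pos x hx.2 j hj
      have hg : HasDerivAt (fun y : ℝ => 1 - y / a j) (-(a j)⁻¹) x := by
        simpa [one_div] using ((hasDerivAt_id x).div_const (a j)).const_sub 1
      have h1 : HasDerivAt (fun y : ℝ => (1 - y / a j) ^ p)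
          (-(a j)⁻¹ * p * (1 - x / a j) ^ (p - 1)) x := hg.rpow_const (Or.inl hu.ne')
      have h2 := h1.div_const (a j)
      convert h2 using 1
      case e'_4 => rfl
      rw [div_eq_mul_inv]
      ring
    have : -(p * W x)
        = ∑ j ∈ Finset.range (m + 1), -(p * ((1 - x / a j) ^ (p - 1) * ((a j)⁻¹) ^ 2)) := by
      rw [hW_def, Finset.mul_sum]
      simp
    rw [this]
    exact key
  have hderiv : ∀ x ∈ Set.Ioo A B, HasDerivAt (fun y => S y ^ (1 / r) * (T y)⁻¹)
      ((-(r * p) * T x * (1 / r) * S x ^ (1 / r - 1)) * (T x)⁻¹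
        + S x ^ (1 / r) * (-(-(p * W x)) / T x ^ 2)) x := by
    intro x hx
    have hxIcc : x ∈ Set.Icc A B := ⟨hx.1.le, hx.2.le⟩
    have hS1 : HasDerivAt (fun y => S y ^ (1 / r))
        (-(r * p) * T x * (1 / r) * S x ^ (1 / r - 1)) x :=
      (hSderiv x hx).rpow_const (Or.inl (hS_pos x hxIcc).ne')
    have hT1 : HasDerivAt (fun y => (T y)⁻¹) (-(-(p * W x)) / T x ^ 2) x :=
      (hTderiv x hx).inv (hT_pos x hxIcc).ne'
    exact hS1.mul hT1
  have hCS : ∀ x ∈ Set.Ioo A B, T x ^ 2 ≤ S x * W x := by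
    intro x hx
    have h := Finset.sum_mul_sq_le_sq_mul_sq (Finset.range (m + 1))
      (fun j => (1 - x / a j) ^ (p * r / 2))
      (fun j => (1 - x / a j) ^ ((p - 1) / 2) * (a j)⁻¹)
    have eT : ∑ j ∈ Finset.range (m + 1),
        (1 - x / a j) ^ (p * r / 2) * ((1 - x / a j) ^ ((p - 1) / 2) * (a j)⁻¹) = T x := by
      rw [hT_def]
      apply Finset.sum_congr rfl
      intro j hj
      have hu : 0 < 1 - x / a j := hu_pos x hx.2 j hj
      rw [← mul_assoc, ← Real.rpow_add hu,
        show p * r / 2 + (p - 1) / 2 = p by linear_combination hpr' / 2, ← div_eq_mul_inv]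
    have eS : ∑ j ∈ Finset.range (m + 1),
        ((1 - x / a j) ^ (p * r / 2)) ^ 2 = S x := by
      rw [hS_def]
      apply Finset.sum_congr rfl
      intro j hj
      have hu : 0 < 1 - x / a j := hu_pos x hx.2 j hj
      rw [sq, ← Real.rpow_add hu, show p * r / 2 + p * r / 2 = p * r by ring,
        Real.rpow_mul hu.le]
    have eW : ∑ j ∈ Finset.range (m + 1),
        ((1 - x / a j) ^ ((p - 1) / 2) * (a j)⁻¹) ^ 2 = W x := by
      rw [hW_def]
      apply Finset.sum_congr rfl
      intro j hj
      have hu : 0 < 1 - x / a j := hu_pos x hx.2 j hj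
      rw [mul_pow, sq ((1 - x / a j) ^ ((p - 1) / 2)), ← Real.rpow_add hu,
        show (p - 1) / 2 + (p - 1) / 2 = p - 1 by ring]
    rw [eT, eS, eW] at h
    exact h
  have hW_nonneg : ∀ x ∈ Set.Ioo A B, 0 ≤ W x := by
    intro x hx
    apply Finset.sum_nonneg
    intro j hj
    have hu : 0 < 1 - x / a j := hu_pos x hx.2 j hj
    positivity
  have hderiv_nonneg : ∀ x ∈ Set.Ioo A B,
      0 ≤ (-(r * p) * T x * (1 / r) * S x ^ (1 / r - 1)) * (T x)⁻¹
        + S x ^ (1 / r) * (-(-(p * W x)) / T x ^ 2) := by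
    intro x hx
    have hxIcc : x ∈ Set.Icc A B := ⟨hx.1.le, hx.2.le⟩
    have hSx := hS_pos x hxIcc
    have hTx := hT_pos x hxIcc
    have hSa : 0 < S x ^ (1 / r - 1) := Real.rpow_pos_of_pos hSx _
    have hsplit : S x ^ (1 / r) = S x ^ (1 / r - 1) * S x := by
      have h := Real.rpow_add hSx (1 / r - 1) 1
      rw [Real.rpow_one, show 1 / r - 1 + 1 = 1 / r by ring] at h
      exact h
    have h1 : (-(r * p) * T x * (1 / r) * S x ^ (1 / r - 1)) * (T x)⁻¹
        = -(p * S x ^ (1 / r - 1)) := by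
      field_simp
    have h2 : S x ^ (1 / r) * (-(-(p * W x)) / T x ^ 2)
        = p * S x ^ (1 / r - 1) * (S x * W x) / T x ^ 2 := by
      rw [hsplit]
      ring
    rw [h1, h2]
    have hkey : p * S x ^ (1 / r - 1) ≤ p * S x ^ (1 / r - 1) * (S x * W x) / T x ^ 2 := by
      rw [le_div_iff₀ (by positivity : (0 : ℝ) < T x ^ 2)]
      calc p * S x ^ (1 / r - 1) * T x ^ 2
          ≤ p * S x ^ (1 / r - 1) * (S x * W x) :=
            mul_le_mul_of_nonneg_left (hCS x hx) (by positivity)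
        _ = p * S x ^ (1 / r - 1) * (S x * W x) := rfl
    linarith
  -- continuity
  have hScont : ContinuousOn S (Set.Icc A B) := by
    apply continuousOn_finset_sum
    intro j hj
    have hbase : ContinuousOn (fun x : ℝ => 1 - x / a j) (Set.Icc A B) :=
      continuousOn_const.sub (continuous_id.continuousOn.div_const _)
    exact (hbase.rpow_const fun x hx => Or.inr hp.le).rpow_const fun x hx => Or.inr hr0.le
  have hTcont : ContinuousOn T (Set.Icc A B) := by
    apply continuousOn_finset_sum
    intro j hj
    have hbase : ContinuousOn (fun x : ℝ => 1 - x / a j) (Set.Icc A B) :=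
      continuousOn_const.sub (continuous_id.continuousOn.div_const _)
    exact (hbase.rpow_const fun x hx => Or.inr hp.le).div_const _
  have hFcont : ContinuousOn (fun x => S x ^ (1 / r) * (T x)⁻¹) (Set.Icc A B) :=
    (hScont.rpow_const fun x hx => Or.inr (by positivity)).mul
      (hTcont.inv₀ fun x hx => (hT_pos x hx).ne')
  apply monotoneOn_of_deriv_nonneg (convex_Icc A B) hFcont
  · intro x hx
    rw [interior_Icc] at hx
    exact (hderiv x hx).differentiableAt.differentiableWithinAt
  · intro x hx
    rw [interior_Icc] at hx
    rw [(hderiv x hx).deriv]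
    exact hderiv_nonneg x hx

/-- for `1 < r < ∞` and positive sequences `t`, `s` with `(t_k s_k)`
strictly decreasing, the finite sequence `d₁ ≥ d₂ ≥ … ≥ d_n` is non-increasing. -/
theorem dSeq_antitone (r : ℝ) (hr : 1 < r)
    (t s : ℕ → ℝ) (htpos : ∀ k, 0 < t k) (hspos : ∀ k, 0 < s k)
    (hts : StrictAnti fun k => t k * s k) (n : ℕ) :
    ∀ m, 1 ≤ m → m + 1 ≤ n → dSeq r t s (m + 1) ≤ dSeq r t s m := by
  intro m hm _
  have hr0 : (0 : ℝ) < r := lt_trans one_pos hr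
  have hr1 : (0 : ℝ) < r - 1 := sub_pos.mpr hr
  have hpos : ∀ k, 0 < t k * s k := fun k => mul_pos (htpos k) (hspos k)
  have hmono := F_monoOn r hr (fun k => t k * s k) hpos hts m hm
  have hAB : t (m + 1) * s (m + 1) < t m * s m := hts (Nat.lt_succ_self m)
  have hF := hmono (Set.left_mem_Icc.mpr hAB.le) (Set.right_mem_Icc.mpr hAB.le) hAB.le
  simp only at hF
  have e1 : dSeq r t s (m + 1) =
      (∑ j ∈ Finset.range (m + 1),
          ((1 - t (m + 1) * s (m + 1) / (t j * s j)) ^ (1 / (r - 1))) ^ r) ^ (1 / r) *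
      (∑ j ∈ Finset.range (m + 1),
          (1 - t (m + 1) * s (m + 1) / (t j * s j)) ^ (1 / (r - 1)) / (t j * s j))⁻¹ := by
    simp only [dSeq]
    rw [if_neg (by omega)]
  have htermS : (((1 - t m * s m / (t m * s m)) ^ (1 / (r - 1))) : ℝ) ^ r = 0 := by
    rw [div_self (hpos m).ne', sub_self, Real.zero_rpow (one_div_ne_zero hr1.ne'),
      Real.zero_rpow hr0.ne']
  have htermT : ((1 - t m * s m / (t m * s m)) ^ (1 / (r - 1)) : ℝ) / (t m * s m) = 0 := by
    rw [div_self (hpos m).ne', sub_self, Real.zero_rpow (one_div_ne_zero hr1.ne'), zero_div]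
  have e2 : (∑ j ∈ Finset.range (m + 1),
          ((1 - t m * s m / (t j * s j)) ^ (1 / (r - 1))) ^ r) ^ (1 / r) *
      (∑ j ∈ Finset.range (m + 1),
          (1 - t m * s m / (t j * s j)) ^ (1 / (r - 1)) / (t j * s j))⁻¹ = dSeq r t s m := by
    rw [Finset.sum_range_succ, Finset.sum_range_succ, htermS, htermT, add_zero, add_zero]
    rcases eq_or_lt_of_le hm with h1 | h2
    · -- m = 1
      have hm1 : m = 1 := h1.symm
      subst hm1
      rw [Finset.sum_range_one, Finset.sum_range_one]
      have hx : 0 < 1 - t 1 * s 1 / (t 0 * s 0) := by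
        have h : t 1 * s 1 < t 0 * s 0 := hts Nat.zero_lt_one
        have := (div_lt_one (hpos 0)).mpr h
        linarith
      have hxp : 0 < (1 - t 1 * s 1 / (t 0 * s 0)) ^ (1 / (r - 1)) :=
        Real.rpow_pos_of_pos hx _
      rw [← Real.rpow_mul (Real.rpow_nonneg hx.le _), mul_one_div, div_self hr0.ne',
        Real.rpow_one]
      simp only [dSeq, if_pos]
      field_simp
    · simp only [dSeq]
      rw [if_neg (by omega)]
  rw [e1, ← e2]
  exact hF
end
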